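/- Let n = 2k−1 with k ≥ 1, and let σ ∈ S_{n+1} with t = σ^{-1}(n+1). Define T_σ : Z_2^n → Z_2^n by (T_σ v)_i = v_{σ^{-1}(i)} + v_t (with v_{n+1} = 0). If wt(v) = k then wt(T_σ v) = k. -/

import Mathlib

open Finset

def extV (n : ℕ) (v : Fin n → ZMod 2) : Fin (n + 1) → ZMod 2 :=
  fun j => if h : (j : ℕ) < n then v ⟨j, h⟩ else 0

def Tmap (n : ℕ) (σ : Equiv.Perm (Fin (n + 1))) (v : Fin n → ZMod 2) : Fin n → ZMod 2 :=
  fun i => extV n v (σ⁻¹ (Fin.castSucc i)) + extV n v (σ⁻¹ (Fin.last n))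

lemma zmod2_cases (x : ZMod 2) : x = 0 ∨ x = 1 := by
  fin_cases x
  · exact Or.inl rfl
  · exact Or.inr rfl

theorem stmt_2 (n k : ℕ) (hk : 1 ≤ k) (hn : n = 2 * k - 1) (σ : Equiv.Perm (Fin (n + 1)))
    (v : Fin n → ZMod 2) (hv : hammingNorm v = k) :
    hammingNorm (Tmap n σ v) = k := by
  have hn1 : n + 1 = 2 * k := by omega
  set ev := extV n v with hev
  set t := σ⁻¹ (Fin.last n) with ht
  set c := ev t with hc
  have hevlast : ev (Fin.last n) = 0 := by simp [hev, extV]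
  have hevcast : ∀ i : Fin n, ev (Fin.castSucc i) = v i := by
    intro i; simp [hev, extV, i.isLt]
  have hwt : #(univ.filter (fun j : Fin (n+1) => ev j ≠ 0)) = k := by
    rw [← hv]
    unfold hammingNorm
    rw [show (univ.filter (fun j : Fin (n+1) => ev j ≠ 0))
        = ((univ : Finset (Fin n)).filter (fun i => v i ≠ 0)).map Fin.castSuccEmb by
      ext j
      simp only [mem_filter, mem_univ, true_and, mem_map]
      constructor
      · intro hj
        have hjn : (j : ℕ) < n := by
          by_contra h
          have : j = Fin.last n := by apply Fin.ext; simp; omega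
          rw [this, hevlast] at hj; exact hj rfl
        refine ⟨⟨j, hjn⟩, ?_, rfl⟩
        rw [← hevcast ⟨j, hjn⟩]
        exact hj
      · rintro ⟨i, hi, rfl⟩
        rw [show (Fin.castSuccEmb i : Fin (n+1)) = Fin.castSucc i from rfl, hevcast]
        exact hi]
    rw [card_map]
  have hmain : #(univ.filter (fun i : Fin n => Tmap n σ v i ≠ 0))
      = #(univ.filter (fun j : Fin (n+1) => ev j + c ≠ 0 ∧ j ≠ t)) := by
    apply card_bij (fun i _ => σ⁻¹ (Fin.castSucc i))
    · intro i hi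
      simp only [mem_filter, mem_univ, true_and] at hi ⊢
      refine ⟨hi, fun h => ?_⟩
      have h2 : Fin.castSucc i = Fin.last n := by
        have := congrArg σ h
        simpa [ht] using this
      have : (i : ℕ) = n := by
        have := congrArg Fin.val h2
        simpa using this
      exact absurd this (by have := i.isLt; omega)
    · intro a _ b _ h
      exact Fin.castSucc_injective n (σ⁻¹.injective h)
    · intro j hj
      simp only [mem_filter, mem_univ, true_and] at hj
      obtain ⟨hj1, hj2⟩ := hj
      have hσj : σ j ≠ Fin.last n := by
        intro h
        apply hj2
        rw [ht, ← h]; simp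
      have hlt : (σ j : ℕ) < n := by
        have h1 := (σ j).isLt
        have h2 : (σ j : ℕ) ≠ n := fun h => hσj (Fin.ext (by simp [h]))
        omega
      refine ⟨⟨σ j, hlt⟩, ?_, ?_⟩
      · simp only [mem_filter, mem_univ, true_and]
        show Tmap n σ v _ ≠ 0
        unfold Tmap
        rw [show Fin.castSucc (⟨σ j, hlt⟩ : Fin n) = σ j from Fin.ext rfl]
        simpa [← hc, ← ht] using hj1
      · rw [show Fin.castSucc (⟨σ j, hlt⟩ : Fin n) = σ j from Fin.ext rfl]
        simp
  unfold hammingNorm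
  show #(univ.filter (fun i : Fin n => Tmap n σ v i ≠ 0)) = k
  rw [hmain]
  rcases zmod2_cases c with h0 | h1
  · rw [show (univ.filter (fun j : Fin (n+1) => ev j + c ≠ 0 ∧ j ≠ t))
        = univ.filter (fun j : Fin (n+1) => ev j ≠ 0) by
      ext j
      simp only [mem_filter, mem_univ, true_and, h0, add_zero]
      constructor
      · exact fun h => h.1
      · intro h
        refine ⟨h, fun hjt => ?_⟩
        rw [hjt, ← hc, h0] at h; exact h rfl]
    exact hwt
  · have hzero : #(univ.filter (fun j : Fin (n+1) => ev j = 0)) = k := by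
      have htot := card_filter_add_card_filter_not
        (s := (univ : Finset (Fin (n+1)))) (p := fun j => ev j ≠ 0)
      simp only [card_univ, Fintype.card_fin] at htot
      have h2 : #(univ.filter (fun j : Fin (n+1) => ¬ ev j ≠ 0))
          = #(univ.filter (fun j : Fin (n+1) => ev j = 0)) := by
        congr 1; ext j; simp
      omega
    rw [show (univ.filter (fun j : Fin (n+1) => ev j + c ≠ 0 ∧ j ≠ t))
        = univ.filter (fun j : Fin (n+1) => ev j = 0) by
      ext j
      simp only [mem_filter, mem_univ, true_and, h1]
      constructor
      · rintro ⟨h, _⟩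
        rcases zmod2_cases (ev j) with h' | h'
        · exact h'
        · exfalso; apply h; rw [h']; decide
      · intro h
        refine ⟨by rw [h]; decide, fun hjt => ?_⟩
        rw [hjt, ← hc, h1] at h
        exact one_ne_zero h]
    exact hzero
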